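/- arXiv:1305.2044 — 2 statements merged into one kernel-verified Lean document; each statement's English description precedes it below -/
import Mathlib

section
/- Let g, h, x ∈ H_n with x^{-1} g x = h and t_i(x) ≡ 0 (mod |t_i(g)|) for all i ∈ I(g) = {i : t_i(g) ≠ 0}. Then the equivalence relations ∼_g and ∼_h on {1,…,n} coincide. -/
namespace HoughtonPaper

/-- The set `X_n = {1,…,n} × ℕ` (rays indexed by `Fin n`). -/
abbrev X (n : ℕ) := Fin n × ℕ

/-- `g` acts as the translation by `t i` on the ray `i` from the point `z` on. -/
def EvTransFrom {n : ℕ} (g : Equiv.Perm (X n)) (t : Fin n → ℤ) (z : ℕ) : Prop :=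
  ∀ (i : Fin n) (m : ℕ), z ≤ m →
    (g (i, m)).1 = i ∧ ((g (i, m)).2 : ℤ) = (m : ℤ) + t i

/-- `g` is eventually a translation with translation vector `t`. -/
def EvTrans {n : ℕ} (g : Equiv.Perm (X n)) (t : Fin n → ℤ) : Prop :=
  ∃ z : ℕ, EvTransFrom g t z

/-- Membership in Houghton's group `H_n`. -/
def InH {n : ℕ} (g : Equiv.Perm (X n)) : Prop :=
  ∃ t : Fin n → ℤ, EvTrans g t

/-- Support of a permutation. -/
def supp {α : Type*} (g : Equiv.Perm α) : Set α := {x | g x ≠ x}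

/-- Membership in `FSym(X_n)`, the finitely supported permutations. -/
def InFSym {n : ℕ} (g : Equiv.Perm (X n)) : Prop := (supp g).Finite

/-- Two sets are almost equal if their symmetric difference is finite. -/
def AlmostEq {α : Type*} (A B : Set α) : Prop := (symmDiff A B).Finite

/-- The set `X_{i,r}(g) = {(i,m) : m ≡ r mod |t_i(g)|}`, for `t` the translation vector. -/
def Xir {n : ℕ} (i : Fin n) (t : Fin n → ℤ) (r : ℕ) : Set (X n) :=
  {p : X n | p.1 = i ∧ p.2 % (t i).natAbs = r}

/-- Forward orbit `{(i,m)g^k : k ≥ 0}`. -/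
def fwdOrbit {n : ℕ} (g : Equiv.Perm (X n)) (p : X n) : Set (X n) :=
  Set.range fun k : ℕ => (g ^ k) p

/-- The orbit `{x g^k : k ∈ ℤ}`. -/
def orbit {n : ℕ} (g : Equiv.Perm (X n)) (p : X n) : Set (X n) :=
  Set.range fun k : ℤ => (g ^ k) p

/-- `A` is an infinite orbit of `g`. -/
def IsInfOrbit {n : ℕ} (g : Equiv.Perm (X n)) (A : Set (X n)) : Prop :=
  (∃ p : X n, A = orbit g p) ∧ A.Infinite

/-- The generating relation of `∼_g`: some infinite orbit of `g` is almost equal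
to `X_{i,r}(g) ∪ X_{j,s}(g)`. -/
def BaseRel {n : ℕ} (g : Equiv.Perm (X n)) (t : Fin n → ℤ) (i j : Fin n) : Prop :=
  ∃ r s : ℕ, r < (t i).natAbs ∧ s < (t j).natAbs ∧
    ∃ A : Set (X n), IsInfOrbit g A ∧ AlmostEq A (Xir i t r ∪ Xir j t s)

/-- The equivalence relation `∼_g` on the rays, generated by `BaseRel`. -/
def SimRel {n : ℕ} (g : Equiv.Perm (X n)) (t : Fin n → ℤ) : Fin n → Fin n → Prop :=
  Relation.EqvGen (BaseRel g t)

def genFun {n : ℕ} [NeZero n] (i : Fin n) : X n → X n :=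
  fun p =>
    if p.1 = 0 then ((0 : Fin n), p.2 + 1)
    else if p.1 = i then (if p.2 = 0 then ((0 : Fin n), 0) else (i, p.2 - 1))
    else p

def genInvFun {n : ℕ} [NeZero n] (i : Fin n) : X n → X n :=
  fun p =>
    if p.1 = 0 then (if p.2 = 0 then (i, 0) else ((0 : Fin n), p.2 - 1))
    else if p.1 = i then (i, p.2 + 1)
    else p

/-- The generator `g_i` of Houghton's group (ray `1` of the paper is ray `0` here). -/
def gen {n : ℕ} [NeZero n] (i : Fin n) (hi : i ≠ 0) : Equiv.Perm (X n) where
  toFun := genFun i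
  invFun := genInvFun i
  left_inv := by
    rintro ⟨j, m⟩
    by_cases hj : j = 0
    · subst hj
      simp [genFun, genInvFun]
    · by_cases hji : j = i
      · subst hji
        rcases Nat.eq_zero_or_pos m with hm | hm
        · subst hm; simp [genFun, genInvFun, hi]
        · simp [genFun, genInvFun, hi, hm.ne', Nat.sub_add_cancel hm]
      · simp [genFun, genInvFun, hj, hji]
  right_inv := by
    rintro ⟨j, m⟩
    by_cases hj : j = 0
    · subst hj
      rcases Nat.eq_zero_or_pos m with hm | hm
      · subst hm; simp [genFun, genInvFun, hi]
      · simp [genFun, genInvFun, hm.ne', hi.symm, Nat.sub_add_cancel hm]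
    · by_cases hji : j = i
      · subst hji
        simp [genFun, genInvFun, hj]
      · simp [genFun, genInvFun, hj, hji]

/-- The transposition `τ` exchanging `(1,0)` and `(2,0)` (here `(0,0)` and `(1,0)`). -/
def tau (n : ℕ) [NeZero n] : Equiv.Perm (X n) :=
  Equiv.swap ((0 : Fin n), 0) ((1 : Fin n), 0)

/-- Letters of the alphabet `{g_2,…,g_n}^{±1}`. -/
abbrev Letter (n : ℕ) [NeZero n] := {i : Fin n // i ≠ 0} × Bool

/-- Words over `{g_2,…,g_n}^{±1}`. -/
abbrev Word (n : ℕ) [NeZero n] := List (Letter n)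

def evalLetter {n : ℕ} [NeZero n] (l : Letter n) : Equiv.Perm (X n) :=
  if l.2 then gen l.1.1 l.1.2 else (gen l.1.1 l.1.2)⁻¹

/-- The element of `Sym(X_n)` represented by a word. -/
def wordProd {n : ℕ} [NeZero n] (w : Word n) : Equiv.Perm (X n) :=
  (w.map evalLetter).prod

-- auxiliary lemmas

lemma evtrans_unique {n : ℕ} {g : Equiv.Perm (X n)} {t t' : Fin n → ℤ}
    (h1 : EvTrans g t) (h2 : EvTrans g t') : t = t' := by
  obtain ⟨z1, hz1⟩ := h1
  obtain ⟨z2, hz2⟩ := h2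
  funext i
  have a1 := (hz1 i (max z1 z2) (le_max_left _ _)).2
  have a2 := (hz2 i (max z1 z2) (le_max_right _ _)).2
  omega

lemma evtrans_mul {n : ℕ} {a b : Equiv.Perm (X n)} {ta tb : Fin n → ℤ}
    (ha : EvTrans a ta) (hb : EvTrans b tb) : EvTrans (a * b) (ta + tb) := by
  obtain ⟨za, hza⟩ := ha
  obtain ⟨zb, hzb⟩ := hb
  refine ⟨za + zb + ∑ i : Fin n, (tb i).natAbs, fun i m hm => ?_⟩
  have hsum : (tb i).natAbs ≤ ∑ j : Fin n, (tb j).natAbs :=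
    Finset.single_le_sum (f := fun j => (tb j).natAbs) (fun _ _ => Nat.zero_le _)
      (Finset.mem_univ i)
  obtain ⟨h1, h2⟩ := hzb i m (by omega)
  have hbx : b (i, m) = (i, (b (i, m)).2) := Prod.ext h1 rfl
  have hge : za ≤ (b (i, m)).2 := by omega
  obtain ⟨h3, h4⟩ := hza i (b (i, m)).2 hge
  have happ : (a * b) (i, m) = a (i, (b (i, m)).2) := by
    rw [Equiv.Perm.mul_apply, ← hbx]
  rw [happ]
  refine ⟨h3, ?_⟩
  rw [h4]
  simp only [Pi.add_apply]
  omega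

lemma evtrans_inv {n : ℕ} {x : Equiv.Perm (X n)} {tx : Fin n → ℤ}
    (hx : EvTrans x tx) : EvTrans x⁻¹ (fun i => -tx i) := by
  obtain ⟨z, hz⟩ := hx
  refine ⟨z + ∑ i : Fin n, (tx i).natAbs, fun i m hm => ?_⟩
  have hsum : (tx i).natAbs ≤ ∑ j : Fin n, (tx j).natAbs :=
    Finset.single_le_sum (f := fun j => (tx j).natAbs) (fun _ _ => Nat.zero_le _)
      (Finset.mem_univ i)
  set m' : ℕ := ((m : ℤ) - tx i).toNat with hm'def
  have hm' : (m' : ℤ) = (m : ℤ) - tx i := by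
    rw [hm'def]
    rw [Int.toNat_of_nonneg (by omega)]
  have hz' : z ≤ m' := by omega
  obtain ⟨h1, h2⟩ := hz i m' hz'
  have hxm : x (i, m') = (i, m) := by
    refine Prod.ext h1 ?_
    have : ((x (i, m')).2 : ℤ) = (m : ℤ) := by omega
    exact_mod_cast this
  have : x⁻¹ (i, m) = (i, m') := by rw [← hxm, ← Equiv.Perm.mul_apply, inv_mul_cancel, Equiv.Perm.one_apply]
  rw [this]
  constructor
  · rfl
  · simp only
    omega

lemma finite_low {n z : ℕ} : {p : X n | p.2 < z}.Finite := by
  apply Set.Finite.subset ((Set.finite_univ (α := Fin n)).prod (Set.finite_Iio z))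
  intro p hp
  exact ⟨trivial, hp⟩

lemma almostEq_union {α : Type*} {A B C D : Set α} (h1 : AlmostEq A B) (h2 : AlmostEq C D) :
    AlmostEq (A ∪ C) (B ∪ D) := by
  apply Set.Finite.subset (h1.union h2)
  intro p hp
  simp only [Set.mem_symmDiff, Set.mem_union] at *
  tauto

lemma almostEq_trans {α : Type*} {A B C : Set α} (h1 : AlmostEq A B) (h2 : AlmostEq B C) :
    AlmostEq A C :=
  Set.Finite.subset (h1.union h2) (symmDiff_triangle A B C)

lemma almostEq_image {n : ℕ} (e : Equiv.Perm (X n)) {A B : Set (X n)} (h : AlmostEq A B) :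
    AlmostEq (⇑e '' A) (⇑e '' B) := by
  unfold AlmostEq at *
  rw [← Set.image_symmDiff e.injective]
  exact h.image e

lemma mem_perm_inv_image {n : ℕ} (x : Equiv.Perm (X n)) (S : Set (X n)) (p : X n) :
    p ∈ ⇑x⁻¹ '' S ↔ x p ∈ S := by
  constructor
  · rintro ⟨a, ha, rfl⟩
    simpa using ha
  · intro hp
    exact ⟨x p, hp, by simp⟩

lemma orbit_conj {n : ℕ} {g h x : Equiv.Perm (X n)} (hconj : x⁻¹ * g * x = h) (q : X n) :
    orbit h q = ⇑x⁻¹ '' orbit g (x q) := by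
  have hk : ∀ k : ℤ, h ^ k = x⁻¹ * g ^ k * x := by
    intro k
    rw [← hconj, show x⁻¹ * g * x = x⁻¹ * g * (x⁻¹)⁻¹ by rw [inv_inv], conj_zpow, inv_inv]
  ext p
  simp only [orbit, Set.mem_range, mem_perm_inv_image]
  constructor
  · rintro ⟨k, rfl⟩
    exact ⟨k, by rw [hk k]; simp [Equiv.Perm.mul_apply]⟩
  · rintro ⟨k, hkk⟩
    refine ⟨k, ?_⟩
    rw [hk k]
    simp only [Equiv.Perm.mul_apply] at *
    rw [hkk]
    simp

lemma xinv_xir_almostEq {n : ℕ} {x : Equiv.Perm (X n)} {tx : Fin n → ℤ}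
    (hx : EvTrans x tx) {tg : Fin n → ℤ} {i : Fin n} {r : ℕ}
    (hne : tg i ≠ 0) (hdvd : tg i ∣ tx i) :
    AlmostEq (⇑x⁻¹ '' Xir i tg r) (Xir i tg r) := by
  obtain ⟨z, hz⟩ := hx
  apply Set.Finite.subset (finite_low (n := n) (z := z))
  rintro ⟨j, m⟩ hp
  simp only [Set.mem_setOf_eq]
  by_contra hmlt
  push_neg at hmlt
  obtain ⟨h1, h2⟩ := hz j m hmlt
  have hdvd' : ((tg i).natAbs : ℤ) ∣ tx i := (Int.natAbs_dvd).mpr hdvd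
  obtain ⟨c, hc⟩ := hdvd'
  have key : x (j, m) ∈ Xir i tg r ↔ (j, m) ∈ Xir i tg r := by
    simp only [Xir, Set.mem_setOf_eq, h1]
    by_cases hji : j = i
    · subst hji
      simp only [true_and]
      have hmod : ((x (j, m)).2 : ℤ) % ((tg j).natAbs : ℤ) = (m : ℤ) % ((tg j).natAbs : ℤ) := by
        rw [h2, hc]
        exact Int.add_mul_emod_self_left _ _ _
      have : (((x (j, m)).2 % (tg j).natAbs : ℕ) : ℤ) = ((m % (tg j).natAbs : ℕ) : ℤ) := by
        rw [Int.natCast_mod, Int.natCast_mod]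
        exact hmod
      have := Nat.cast_injective (R := ℤ) this
      rw [this]
    · simp [hji]
  rw [Set.mem_symmDiff] at hp
  rw [mem_perm_inv_image] at hp
  tauto

lemma baseRel_conj {n : ℕ} {g h x : Equiv.Perm (X n)} {tg tx : Fin n → ℤ}
    (hx : EvTrans x tx) (hconj : x⁻¹ * g * x = h)
    (hmod : ∀ i : Fin n, tg i ≠ 0 → tg i ∣ tx i) {i j : Fin n}
    (hb : BaseRel g tg i j) : BaseRel h tg i j := by
  obtain ⟨r, s, hr, hs, A, ⟨⟨p, hA⟩, hinf⟩, hAeq⟩ := hb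
  have hnei : tg i ≠ 0 := fun h0 => by simp [h0] at hr
  have hnej : tg j ≠ 0 := fun h0 => by simp [h0] at hs
  refine ⟨r, s, hr, hs, ⇑x⁻¹ '' A, ⟨⟨x⁻¹ p, ?_⟩, hinf.image ((x⁻¹ : Equiv.Perm (X n)).injective.injOn)⟩, ?_⟩
  · rw [orbit_conj hconj, ← Equiv.Perm.mul_apply, mul_inv_cancel, Equiv.Perm.one_apply, hA]
  · apply almostEq_trans (almostEq_image x⁻¹ hAeq)
    rw [Set.image_union]
    exact almostEq_union (xinv_xir_almostEq hx hnei (hmod i hnei))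
      (xinv_xir_almostEq hx hnej (hmod j hnej))

end HoughtonPaper

open HoughtonPaper

theorem statement11 (n : ℕ) (hn : 2 ≤ n) (g h x : Equiv.Perm (X n))
    (tg th tx : Fin n → ℤ) (hg : EvTrans g tg) (hh : EvTrans h th) (hx : EvTrans x tx)
    (hconj : x⁻¹ * g * x = h)
    (hmod : ∀ i : Fin n, tg i ≠ 0 → tg i ∣ tx i) :
    ∀ i j : Fin n, SimRel g tg i j ↔ SimRel h th i j := by
  subst hconj
  have h1 : EvTrans (x⁻¹ * g * x) ((fun i => -tx i) + tg + tx) :=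
    evtrans_mul (evtrans_mul (evtrans_inv hx) hg) hx
  have h2 : (fun i => -tx i) + tg + tx = tg := by
    funext i
    simp only [Pi.add_apply]
    ring
  rw [h2] at h1
  have hth : th = tg := evtrans_unique hh h1
  rw [hth]
  have hmod' : ∀ i : Fin n, tg i ≠ 0 → tg i ∣ -tx i := fun i hi => (hmod i hi).neg_right
  have hconj' : (x⁻¹)⁻¹ * (x⁻¹ * g * x) * x⁻¹ = g := by group
  intro i j
  constructor
  · intro hsim
    exact Relation.EqvGen.mono (fun a b hb => baseRel_conj hx rfl hmod hb) _ _ hsim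
  · intro hsim
    exact Relation.EqvGen.mono
      (fun a b hb => baseRel_conj (evtrans_inv hx) hconj' hmod' hb) _ _ hsim
end

section
/- Let g ∈ H_n, let i ∈ {1,…,n}, and let [i] be the equivalence class of i under ∼_g. Let A ⊆ X_n be the union of all infinite orbits of g that are almost equal to X_{j,r}(g) ∪ X_{k,s}(g) for some j, k ∈ [i] and some r, s. Define g_i : X_n → X_n by x g_i = x g for x ∈ A and x g_i = x for x ∉ A. Then g_i is a permutation of X_n, g_i belongs to H_n, g_i commutes with g, and moreover t_j(g_i) = t_j(g) for all j ∈ [i] and t_j(g_i) = 0 for all j ∉ [i]. -/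
open HoughtonPaper

namespace HoughtonAux
open HoughtonPaper

variable {n : ℕ}

lemma mem_orbit_iff {g : Equiv.Perm (X n)} {p q : X n} :
    q ∈ orbit g p ↔ ∃ k : ℤ, (g ^ k) p = q := Iff.rfl

lemma mem_orbit_self (g : Equiv.Perm (X n)) (p : X n) : p ∈ orbit g p :=
  ⟨0, by simp⟩

lemma apply_mem_orbit (g : Equiv.Perm (X n)) {p q : X n} (h : q ∈ orbit g p) :
    g q ∈ orbit g p := by
  obtain ⟨k, rfl⟩ := mem_orbit_iff.mp h
  refine mem_orbit_iff.mpr ⟨1 + k, ?_⟩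
  rw [zpow_add, zpow_one, Equiv.Perm.mul_apply]

lemma inv_apply_mem_orbit (g : Equiv.Perm (X n)) {p q : X n} (h : q ∈ orbit g p) :
    g⁻¹ q ∈ orbit g p := by
  obtain ⟨k, rfl⟩ := mem_orbit_iff.mp h
  refine mem_orbit_iff.mpr ⟨-1 + k, ?_⟩
  rw [zpow_add, Equiv.Perm.mul_apply, zpow_neg_one]

lemma orbit_eq_of_mem (g : Equiv.Perm (X n)) {p q : X n} (h : q ∈ orbit g p) :
    orbit g q = orbit g p := by
  obtain ⟨a, rfl⟩ := mem_orbit_iff.mp h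
  ext y
  rw [mem_orbit_iff, mem_orbit_iff]
  constructor
  · rintro ⟨b, rfl⟩
    exact ⟨b + a, by rw [zpow_add, Equiv.Perm.mul_apply]⟩
  · rintro ⟨c, rfl⟩
    refine ⟨c - a, ?_⟩
    rw [← Equiv.Perm.mul_apply, ← zpow_add, sub_add_cancel]

lemma orbit_inv (g : Equiv.Perm (X n)) (p : X n) : orbit g⁻¹ p = orbit g p := by
  ext y
  rw [mem_orbit_iff, mem_orbit_iff]
  constructor
  · rintro ⟨k, rfl⟩
    exact ⟨-k, by simp [zpow_neg, inv_zpow]⟩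
  · rintro ⟨k, rfl⟩
    exact ⟨-k, by simp [zpow_neg, inv_zpow]⟩

lemma zpow_neg_nat {α : Type*} (g : Equiv.Perm α) (q : ℕ) (x : α) :
    (g ^ (-(q : ℤ))) x = ((g⁻¹) ^ q) x := by
  rw [zpow_neg, zpow_natCast, ← inv_pow]

lemma zpow_inj_of_infinite (g : Equiv.Perm (X n)) (x : X n)
    (hx : (orbit g x).Infinite) {a b : ℤ} (h : (g ^ a) x = (g ^ b) x) : a = b := by
  by_contra hab
  have hper : ∀ c : ℤ, (g ^ c) x = x → 0 < c → (orbit g x).Finite := by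
    intro c hc hcpos
    have hfix : Function.IsFixedPt (⇑(g ^ c)) x := hc
    have hsub : orbit g x ⊆ (fun r : ℤ => (g ^ r) x) '' (Set.Ico 0 c) := by
      rintro y ⟨k, rfl⟩
      refine ⟨k % c, ⟨Int.emod_nonneg k hcpos.ne', Int.emod_lt_of_pos k hcpos⟩, ?_⟩
      show (g ^ (k % c)) x = (g ^ k) x
      calc (g ^ (k % c)) x = (g ^ (k % c)) (((g ^ c) ^ (k / c)) x) := by
            rw [hfix.perm_zpow (k / c)]
        _ = (g ^ k) x := by
            rw [← Equiv.Perm.mul_apply, ← zpow_mul, ← zpow_add,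
              Int.emod_add_mul_ediv k c]
    exact Set.Finite.subset ((Set.finite_Ico 0 c).image _) hsub
  have hone : (g ^ (b - a)) x = x := by
    have h2 : (g ^ a) ((g ^ (b - a)) x) = (g ^ a) x := by
      rw [← Equiv.Perm.mul_apply, ← zpow_add, add_sub_cancel, ← h]
    exact (g ^ a).injective h2
  rcases (Ne.lt_or_gt hab) with hlt | hgt
  · exact hx (hper (b - a) hone (by linarith))
  · have h3 : (g ^ (a - b)) x = x := by
      have h4 : (g ^ (a - b)) ((g ^ (b - a)) x) = (g ^ (a - b)) x := by rw [hone]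
      rw [← Equiv.Perm.mul_apply, ← zpow_add, sub_add_sub_cancel, sub_self, zpow_zero] at h4
      exact h4.symm
    exact hx (hper (a - b) h3 (by linarith))

lemma pow_inj_of_infinite (g : Equiv.Perm (X n)) (x : X n)
    (hx : (orbit g x).Infinite) {a b : ℕ} (h : (g ^ a) x = (g ^ b) x) : a = b := by
  have h2 : ((a : ℤ)) = (b : ℤ) := zpow_inj_of_infinite g x hx
    (by rw [zpow_natCast, zpow_natCast]; exact h)
  exact_mod_cast h2

end HoughtonAux

namespace HoughtonAux
open HoughtonPaper

variable {n : ℕ}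

lemma step_pos {g : Equiv.Perm (X n)} {t : Fin n → ℤ} {z : ℕ} (hz : EvTransFrom g t z)
    {k : Fin n} (hk : 0 < t k) {m : ℕ} (hm : z ≤ m) :
    g (k, m) = (k, m + (t k).natAbs) := by
  obtain ⟨h1, h2⟩ := hz k m hm
  have h3 : ((g (k, m)).2 : ℤ) = ((m + (t k).natAbs : ℕ) : ℤ) := by
    push_cast
    rw [h2, abs_of_pos hk]
  exact Prod.ext h1 (by exact_mod_cast h3)

lemma step_zero {g : Equiv.Perm (X n)} {t : Fin n → ℤ} {z : ℕ} (hz : EvTransFrom g t z)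
    {k : Fin n} (hk : t k = 0) {m : ℕ} (hm : z ≤ m) :
    g (k, m) = (k, m) := by
  obtain ⟨h1, h2⟩ := hz k m hm
  rw [hk, add_zero] at h2
  exact Prod.ext h1 (by exact_mod_cast h2)

lemma fwd_tail {g : Equiv.Perm (X n)} {t : Fin n → ℤ} {z : ℕ} (hz : EvTransFrom g t z)
    {k : Fin n} (hk : 0 < t k) {m : ℕ} (hm : z ≤ m) (p : ℕ) :
    (g ^ p) (k, m) = (k, m + p * (t k).natAbs) := by
  induction p with
  | zero => simp
  | succ q ih =>
    rw [pow_succ', Equiv.Perm.mul_apply, ih,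
      step_pos hz hk (le_trans hm (Nat.le_add_right _ _))]
    congr 1
    ring

lemma inv_evTransFrom {g : Equiv.Perm (X n)} {t : Fin n → ℤ} {z : ℕ}
    (hz : EvTransFrom g t z) :
    ∃ z', EvTransFrom g⁻¹ (fun k => -t k) z' := by
  classical
  refine ⟨z + (Finset.univ.sup fun k => (t k).toNat), fun k m hm => ?_⟩
  have h1 : (t k).toNat ≤ Finset.univ.sup fun k => (t k).toNat :=
    Finset.le_sup (f := fun k => (t k).toNat) (Finset.mem_univ k)
  have h2 : t k ≤ ((t k).toNat : ℤ) := Int.self_le_toNat _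
  have hnn : (z : ℤ) ≤ (m : ℤ) - t k := by
    have h3 : ((z : ℤ)) + (t k).toNat ≤ (m : ℤ) := by
      exact_mod_cast le_trans (Nat.add_le_add_left h1 z) hm
    linarith
  set m' := ((m : ℤ) - t k).toNat with hm'def
  have hc : (m' : ℤ) = (m : ℤ) - t k :=
    Int.toNat_of_nonneg (le_trans (Int.ofNat_nonneg z) hnn)
  have hzm' : z ≤ m' := by exact_mod_cast hc ▸ hnn
  obtain ⟨hf, hs⟩ := hz k m' hzm'
  have hgm : g (k, m') = (k, m) := by
    refine Prod.ext hf ?_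
    have : ((g (k, m')).2 : ℤ) = (m : ℤ) := by rw [hs, hc]; ring
    exact_mod_cast this
  have hginv : g⁻¹ (k, m) = (k, m') := by
    rw [← hgm, Equiv.Perm.inv_def, Equiv.symm_apply_apply]
  rw [hginv]
  exact ⟨rfl, by rw [hc]; ring⟩

lemma settle {g : Equiv.Perm (X n)} {t : Fin n → ℤ} {z : ℕ} (hz : EvTransFrom g t z)
    (x : X n) (hx : (orbit g x).Infinite) :
    ∃ (K : ℕ) (k : Fin n) (m : ℕ), 0 < t k ∧ z ≤ m ∧ (g ^ K) x = (k, m) := by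
  by_contra h
  push_neg at h
  have hfixcon : ∀ p : ℕ, g ((g ^ p) x) = (g ^ p) x → False := by
    intro p hp
    have h1 : (g ^ (p + 1)) x = (g ^ p) x := by
      rw [pow_succ', Equiv.Perm.mul_apply, hp]
    have := pow_inj_of_infinite g x hx h1
    omega
  have key : ∀ h0 : ℕ, ∀ p : ℕ, ((g ^ p) x).2 = h0 → ∃ q, p ≤ q ∧ ((g ^ q) x).2 < z := by
    intro h0
    induction h0 using Nat.strong_induction_on with
    | _ h0 IH =>
      intro p hp
      by_cases hlt : h0 < z
      · exact ⟨p, le_refl _, hp ▸ hlt⟩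
      · push_neg at hlt
        set k := ((g ^ p) x).1 with hk
        have hy : (g ^ p) x = (k, h0) := by rw [hk, ← hp]
        rcases lt_trichotomy (t k) 0 with hneg | hzero | hpos
        · have hnext : (g ^ (p + 1)) x = g (k, h0) := by
            rw [pow_succ', Equiv.Perm.mul_apply, hy]
          obtain ⟨hf, hs⟩ := hz k h0 hlt
          have hlt2 : ((g ^ (p + 1)) x).2 < h0 := by
            have : (((g ^ (p + 1)) x).2 : ℤ) < (h0 : ℤ) := by
              rw [hnext, hs]; linarith
            exact_mod_cast this
          obtain ⟨q, hq1, hq2⟩ := IH _ hlt2 (p + 1) rfl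
          exact ⟨q, by omega, hq2⟩
        · exact (hfixcon p (by rw [hy]; exact step_zero hz hzero hlt)).elim
        · exact absurd hy (h p k h0 hpos hlt)
  have hT : ({p : X n | p.2 < z}).Finite := by
    have hsub : {p : X n | p.2 < z} ⊆ Set.univ ×ˢ Set.Iio z := fun p hp => ⟨trivial, hp⟩
    exact (Set.finite_univ.prod (Set.finite_Iio z)).subset hsub
  have hSfin : {q : ℕ | ((g ^ q) x).2 < z}.Finite := by
    have : {q : ℕ | ((g ^ q) x).2 < z} = (fun q : ℕ => (g ^ q) x) ⁻¹' {p : X n | p.2 < z} :=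
      rfl
    rw [this]
    exact Set.Finite.preimage (fun a _ b _ hab => pow_inj_of_infinite g x hx hab) hT
  obtain ⟨b, hb⟩ := hSfin.bddAbove
  obtain ⟨q, hq1, hq2⟩ := key ((g ^ (b + 1)) x).2 (b + 1) rfl
  have : q ≤ b := hb hq2
  omega

end HoughtonAux

namespace HoughtonAux
open HoughtonPaper

variable {n : ℕ} {g : Equiv.Perm (X n)} {t : Fin n → ℤ} {z z' : ℕ}

lemma tail_mem (hz : EvTransFrom g t z) (hz' : EvTransFrom g⁻¹ (fun k => -t k) z')
    {j : Fin n} (hj : t j ≠ 0) {m : ℕ} (hm : max z z' ≤ m) (p : ℕ) :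
    ((j, m + p * (t j).natAbs) : X n) ∈ orbit g (j, m) := by
  rcases hj.lt_or_gt with hneg | hpos
  · refine mem_orbit_iff.mpr ⟨-(p : ℤ), ?_⟩
    rw [zpow_neg_nat]
    have := fwd_tail hz' (k := j) (by simpa using hneg) (le_trans (le_max_right _ _) hm) p
    simpa [Int.natAbs_neg] using this
  · refine mem_orbit_iff.mpr ⟨(p : ℤ), ?_⟩
    rw [zpow_natCast]
    exact fwd_tail hz hpos (le_trans (le_max_left _ _) hm) p

lemma tail_range_infinite (j : Fin n) (m : ℕ) {d : ℕ} (hd : 0 < d) :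
    (Set.range fun p : ℕ => ((j, m + p * d) : X n)).Infinite := by
  apply Set.infinite_range_of_injective
  intro a b hab
  have h2 : m + a * d = m + b * d := congrArg Prod.snd hab
  have h3 : a * d = b * d := by omega
  exact Nat.eq_of_mul_eq_mul_right hd h3

lemma orbit_ray_infinite (hz : EvTransFrom g t z) (hz' : EvTransFrom g⁻¹ (fun k => -t k) z')
    {j : Fin n} (hj : t j ≠ 0) {m : ℕ} (hm : max z z' ≤ m) :
    (orbit g (j, m)).Infinite := by
  refine Set.Infinite.mono ?_ (tail_range_infinite j m (Int.natAbs_pos.mpr hj))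
  rintro y ⟨p, rfl⟩
  exact tail_mem hz hz' hj hm p

lemma sdiff_subset_symmDiff {α : Type*} (A B : Set α) : A \ B ⊆ symmDiff A B := by
  rw [Set.symmDiff_def]
  exact Set.subset_union_left

lemma sdiff_subset_symmDiff' {α : Type*} (A B : Set α) : B \ A ⊆ symmDiff A B := by
  rw [Set.symmDiff_def]
  exact Set.subset_union_right

lemma ray_mem_pair (hz : EvTransFrom g t z) (hz' : EvTransFrom g⁻¹ (fun k => -t k) z')
    {j : Fin n} (hj : t j ≠ 0) {m : ℕ} (hm : max z z' ≤ m)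
    {j₁ j₂ : Fin n} {r s : ℕ}
    (hae : AlmostEq (orbit g (j, m)) (Xir j₁ t r ∪ Xir j₂ t s)) :
    j = j₁ ∨ j = j₂ := by
  by_contra hcon
  push_neg at hcon
  have hsub : (Set.range fun p : ℕ => ((j, m + p * (t j).natAbs) : X n)) ⊆
      symmDiff (orbit g (j, m)) (Xir j₁ t r ∪ Xir j₂ t s) := by
    rintro y ⟨p, rfl⟩
    apply sdiff_subset_symmDiff
    refine ⟨tail_mem hz hz' hj hm p, ?_⟩
    rintro (h1 | h2)
    · exact hcon.1 h1.1
    · exact hcon.2 h2.1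
  exact (tail_range_infinite j m (Int.natAbs_pos.mpr hj)).mono hsub hae

lemma orbit_almost (hz : EvTransFrom g t z) (hz' : EvTransFrom g⁻¹ (fun k => -t k) z')
    (x : X n) (hx : (orbit g x).Infinite) :
    ∃ (j₁ j₂ : Fin n) (r s : ℕ), r < (t j₁).natAbs ∧ s < (t j₂).natAbs ∧
      AlmostEq (orbit g x) (Xir j₁ t r ∪ Xir j₂ t s) := by
  obtain ⟨K₁, k₁, m₁, hk₁, hm₁, hK₁⟩ := settle hz x hx
  have hxinv : (orbit g⁻¹ x).Infinite := by rw [orbit_inv]; exact hx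
  obtain ⟨K₂, k₂, m₂, hk₂, hm₂, hK₂⟩ := settle hz' x hxinv
  have hk₂' : t k₂ < 0 := by simpa using hk₂
  set d₁ := (t k₁).natAbs with hd₁
  set d₂ := (t k₂).natAbs with hd₂
  have hd₁pos : 0 < d₁ := Int.natAbs_pos.mpr hk₁.ne'
  have hd₂pos : 0 < d₂ := Int.natAbs_pos.mpr hk₂'.ne
  refine ⟨k₁, k₂, m₁ % d₁, m₂ % d₂, Nat.mod_lt _ hd₁pos, Nat.mod_lt _ hd₂pos, ?_⟩
  have hfwd : ∀ p : ℕ, (g ^ (p + K₁)) x = (k₁, m₁ + p * d₁) := by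
    intro p
    rw [pow_add, Equiv.Perm.mul_apply, hK₁, fwd_tail hz hk₁ hm₁ p]
  have hbwd : ∀ p : ℕ, ((g⁻¹) ^ (p + K₂)) x = (k₂, m₂ + p * d₂) := by
    intro p
    rw [pow_add, Equiv.Perm.mul_apply, hK₂]
    have := fwd_tail hz' (k := k₂) hk₂ hm₂ p
    simpa [Int.natAbs_neg] using this
  have hfwdX : ∀ p : ℕ, ((k₁, m₁ + p * d₁) : X n) ∈ Xir k₁ t (m₁ % d₁) :=
    fun p => ⟨rfl, by rw [← hd₁, Nat.add_mul_mod_self_right]⟩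
  have hbwdX : ∀ p : ℕ, ((k₂, m₂ + p * d₂) : X n) ∈ Xir k₂ t (m₂ % d₂) :=
    fun p => ⟨rfl, by rw [← hd₂, Nat.add_mul_mod_self_right]⟩
  rw [AlmostEq, Set.symmDiff_def]
  apply Set.Finite.union
  · -- orbit \ U is finite
    have hsub : orbit g x \ (Xir k₁ t (m₁ % d₁) ∪ Xir k₂ t (m₂ % d₂)) ⊆
        (fun c : ℤ => (g ^ c) x) '' (Set.Icc (-(K₂ : ℤ)) (K₁ : ℤ)) := by
      rintro y ⟨⟨c, rfl⟩, hyU⟩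
      have hc1 : ¬ ((K₁ : ℤ) ≤ c) := by
        intro hle
        set p := (c - K₁).toNat with hp
        have hcp : c = ((p + K₁ : ℕ) : ℤ) := by push_cast; omega
        apply hyU
        left
        show (g ^ c) x ∈ _
        rw [hcp, zpow_natCast, hfwd p]
        exact hfwdX p
      have hc2 : ¬ (c ≤ -(K₂ : ℤ)) := by
        intro hle
        set p := (-c - K₂).toNat with hp
        have hcp : c = -((p + K₂ : ℕ) : ℤ) := by push_cast; omega
        apply hyU
        right
        show (g ^ c) x ∈ _
        rw [hcp, zpow_neg_nat, hbwd p]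
        exact hbwdX p
      exact ⟨c, ⟨by omega, by omega⟩, rfl⟩
    exact Set.Finite.subset ((Set.finite_Icc _ _).image _) hsub
  · -- U \ orbit is finite
    have hsub : (Xir k₁ t (m₁ % d₁) ∪ Xir k₂ t (m₂ % d₂)) \ orbit g x ⊆
        Set.univ ×ˢ Set.Iio (max m₁ m₂) := by
      rintro ⟨k, m⟩ ⟨hU, hO⟩
      refine ⟨trivial, ?_⟩
      show m < max m₁ m₂
      by_contra hge
      push_neg at hge
      rcases hU with ⟨hk, hmod⟩ | ⟨hk, hmod⟩
      · obtain rfl : k = k₁ := hk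
        have hm₁m : m₁ ≤ m := le_trans (le_max_left _ _) hge
        have hmodeq : m₁ ≡ m [MOD d₁] := (hmod.symm : m₁ % d₁ = m % d₁)
        obtain ⟨p, hpeq⟩ := (Nat.modEq_iff_dvd' hm₁m).mp hmodeq
        have hpeq' : m - m₁ = p * d₁ := by rw [hpeq, Nat.mul_comm]
        have hmeq : m = m₁ + p * d₁ := by omega
        exact hO (mem_orbit_iff.mpr ⟨((p + K₁ : ℕ) : ℤ),
          by rw [zpow_natCast, hfwd p, hmeq]⟩)
      · obtain rfl : k = k₂ := hk
        have hm₂m : m₂ ≤ m := le_trans (le_max_right _ _) hge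
        have hmodeq : m₂ ≡ m [MOD d₂] := (hmod.symm : m₂ % d₂ = m % d₂)
        obtain ⟨p, hpeq⟩ := (Nat.modEq_iff_dvd' hm₂m).mp hmodeq
        have hpeq' : m - m₂ = p * d₂ := by rw [hpeq, Nat.mul_comm]
        have hmeq : m = m₂ + p * d₂ := by omega
        exact hO (mem_orbit_iff.mpr ⟨-((p + K₂ : ℕ) : ℤ),
          by rw [zpow_neg_nat, hbwd p, hmeq]⟩)
    exact Set.Finite.subset (Set.finite_univ.prod (Set.finite_Iio _)) hsub

end HoughtonAux

open HoughtonAux in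
theorem statement12 (n : ℕ) (hn : 2 ≤ n) (g : Equiv.Perm (X n)) (t : Fin n → ℤ)
    (hg : EvTrans g t) (i : Fin n) (A : Set (X n))
    (hA : A = {p : X n | ∃ B : Set (X n), IsInfOrbit g B ∧ p ∈ B ∧
      ∃ j k : Fin n, SimRel g t i j ∧ SimRel g t i k ∧
        ∃ r s : ℕ, r < (t j).natAbs ∧ s < (t k).natAbs ∧
          AlmostEq B (Xir j t r ∪ Xir k t s)}) :
    ∃ e : Equiv.Perm (X n), (∀ p ∈ A, e p = g p) ∧ (∀ p ∉ A, e p = p) ∧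
      Commute e g ∧
      ∃ t' : Fin n → ℤ, EvTrans e t' ∧
        (∀ j : Fin n, SimRel g t i j → t' j = t j) ∧
        (∀ j : Fin n, ¬ SimRel g t i j → t' j = 0) := by
  classical
  obtain ⟨z, hz⟩ := hg
  obtain ⟨z', hz'⟩ := inv_evTransFrom hz
  have hAg : ∀ p, p ∈ A → g p ∈ A := by
    intro p hp
    rw [hA] at hp ⊢
    obtain ⟨B, ⟨⟨q, rfl⟩, hBinf⟩, hpB, rest⟩ := hp
    exact ⟨_, ⟨⟨q, rfl⟩, hBinf⟩, apply_mem_orbit g hpB, rest⟩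
  have hAginv : ∀ p, p ∈ A → g⁻¹ p ∈ A := by
    intro p hp
    rw [hA] at hp ⊢
    obtain ⟨B, ⟨⟨q, rfl⟩, hBinf⟩, hpB, rest⟩ := hp
    exact ⟨_, ⟨⟨q, rfl⟩, hBinf⟩, inv_apply_mem_orbit g hpB, rest⟩
  have hAgiff : ∀ p, g p ∈ A ↔ p ∈ A := by
    intro p
    constructor
    · intro h
      have h2 := hAginv _ h
      rwa [Equiv.Perm.inv_def, Equiv.symm_apply_apply] at h2
    · exact hAg p
  have F1 : ∀ j : Fin n, t j ≠ 0 → SimRel g t i j → ∀ m : ℕ, max z z' ≤ m →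
      ((j, m) : X n) ∈ A := by
    intro j hj hS m hm
    have hxinf : (orbit g ((j, m) : X n)).Infinite := orbit_ray_infinite hz hz' hj hm
    obtain ⟨j₁, j₂, r, s, hr, hs, hae⟩ := orbit_almost hz hz' ((j, m) : X n) hxinf
    have hbase : BaseRel g t j₁ j₂ :=
      ⟨r, s, hr, hs, orbit g ((j, m) : X n), ⟨⟨(j, m), rfl⟩, hxinf⟩, hae⟩
    have hpair := ray_mem_pair hz hz' hj hm hae
    have hS₁ : SimRel g t i j₁ ∧ SimRel g t i j₂ := by
      rcases hpair with rfl | rfl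
      · exact ⟨hS, Relation.EqvGen.trans _ _ _ hS (Relation.EqvGen.rel _ _ hbase)⟩
      · exact ⟨Relation.EqvGen.trans _ _ _ hS
          (Relation.EqvGen.symm _ _ (Relation.EqvGen.rel _ _ hbase)), hS⟩
    rw [hA]
    exact ⟨orbit g ((j, m) : X n), ⟨⟨(j, m), rfl⟩, hxinf⟩, mem_orbit_self g (j, m),
      j₁, j₂, hS₁.1, hS₁.2, r, s, hr, hs, hae⟩
  have F2 : ∀ j : Fin n, t j ≠ 0 → ¬ SimRel g t i j → ∀ m : ℕ, max z z' ≤ m →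
      ((j, m) : X n) ∉ A := by
    intro j hj hS m hm hmem
    rw [hA] at hmem
    obtain ⟨B, ⟨⟨q, rfl⟩, hBinf⟩, hpB, j', k', hS', hS'', r, s, hr, hs, hae⟩ := hmem
    rw [← orbit_eq_of_mem g hpB] at hae
    rcases ray_mem_pair hz hz' hj hm hae with rfl | rfl
    · exact hS hS'
    · exact hS hS''
  refine ⟨{ toFun := fun p => if p ∈ A then g p else p
            invFun := fun p => if p ∈ A then g⁻¹ p else p
            left_inv := by
              intro p
              by_cases hp : p ∈ A
              · simp only [if_pos hp, if_pos (hAg p hp), Equiv.Perm.inv_def, Equiv.symm_apply_apply]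
              · simp only [if_neg hp]
            right_inv := by
              intro p
              by_cases hp : p ∈ A
              · simp only [if_pos hp, if_pos (hAginv p hp)]; rw [Equiv.Perm.inv_def, Equiv.apply_symm_apply]
              · simp only [if_neg hp] }, ?_, ?_, ?_, ?_⟩
  · intro p hp
    show (if p ∈ A then g p else p) = g p
    rw [if_pos hp]
  · intro p hp
    show (if p ∈ A then g p else p) = p
    rw [if_neg hp]
  · apply Equiv.ext
    intro p
    rw [Equiv.Perm.mul_apply, Equiv.Perm.mul_apply]
    show (if g p ∈ A then g (g p) else g p) = g (if p ∈ A then g p else p)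
    by_cases hp : p ∈ A
    · rw [if_pos hp, if_pos ((hAgiff p).mpr hp)]
    · rw [if_neg hp, if_neg (fun h => hp ((hAgiff p).mp h))]
  · refine ⟨fun j => if SimRel g t i j then t j else 0, ⟨max z z', ?_⟩,
      fun j h => if_pos h, fun j h => if_neg h⟩
    intro j m hm
    have hmz : z ≤ m := le_trans (le_max_left _ _) hm
    simp only [Equiv.coe_fn_mk]
    by_cases hj0 : t j = 0
    · have hfix : g ((j, m) : X n) = (j, m) := step_zero hz hj0 hmz
      split_ifs with hmem hSim hSim
      · rw [hfix, hj0]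
        exact ⟨rfl, by push_cast; ring⟩
      · rw [hfix]
        exact ⟨rfl, by push_cast; ring⟩
      · rw [hj0]
        exact ⟨rfl, by push_cast; ring⟩
      · exact ⟨rfl, by push_cast; ring⟩
    · by_cases hS : SimRel g t i j
      · have hmA : ((j, m) : X n) ∈ A := F1 j hj0 hS m hm
        rw [if_pos hmA, if_pos hS]
        exact hz j m hmz
      · have hmA : ((j, m) : X n) ∉ A := F2 j hj0 hS m hm
        rw [if_neg hmA, if_neg hS]
        exact ⟨rfl, by push_cast; ring⟩
end
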